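/- Assume that the Green function G^Ω satisfies the two-sided estimate (G2) and is jointly continuous on (Ω×Ω)∖{x=y}, and that the Martin kernel M^Ω exists and satisfies M^Ω(x,z) ≍ δ(x)^γ/|x−z|^{N−2s+2γ} for x ∈ Ω, z ∈ ∂Ω. Let 1 < p < p* = (N+γ)/(N+γ−2s). Then for every z ∈ ∂Ω, lim_{Ω∋x→z} 𝔾^Ω[M^Ω(·,z)^p](x)/M^Ω(x,z) = 0. -/

import Mathlib

open MeasureTheory Metric Set Filter Topology Function
open scoped ENNReal NNReal

noncomputable section

/-- Distance to the boundary of `Ω` (the function `δ`). -/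
def dB {N : ℕ} (Ω : Set (EuclideanSpace ℝ (Fin N))) (x : EuclideanSpace ℝ (Fin N)) : ℝ :=
  Metric.infDist x (frontier Ω)

/-- Reference kernel appearing in the two-sided Green estimate (G2). -/
def greenRef {N : ℕ} (Ω : Set (EuclideanSpace ℝ (Fin N))) (s γ : ℝ)
    (x y : EuclideanSpace ℝ (Fin N)) : ℝ :=
  dist x y ^ (2 * s - (N : ℝ)) * (min (dB Ω x / dist x y) 1) ^ γ *
    (min (dB Ω y / dist x y) 1) ^ γ

/-- Two-sided Green estimate (G2). -/
def GreenTwoSided {N : ℕ} (Ω : Set (EuclideanSpace ℝ (Fin N)))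
    (G : EuclideanSpace ℝ (Fin N) → EuclideanSpace ℝ (Fin N) → ℝ) (s γ : ℝ) : Prop :=
  ∃ c₁ c₂ : ℝ, 0 < c₁ ∧ 0 < c₂ ∧
    ∀ x ∈ Ω, ∀ y ∈ Ω, x ≠ y →
      c₁ * greenRef Ω s γ x y ≤ G x y ∧ G x y ≤ c₂ * greenRef Ω s γ x y

/-- Green operator acting on functions: `𝔾[f](x) = ∫_Ω G(x,y) f(y) dy`. -/
def greenFun {N : ℕ} (Ω : Set (EuclideanSpace ℝ (Fin N)))
    (G : EuclideanSpace ℝ (Fin N) → EuclideanSpace ℝ (Fin N) → ℝ)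
    (f : EuclideanSpace ℝ (Fin N) → ℝ) (x : EuclideanSpace ℝ (Fin N)) : ℝ :=
  ∫ y in Ω, G x y * f y

/-- Green operator acting on a nonnegative measure: `𝔾[μ](x) = ∫ G(x,y) dμ(y)`. -/
def greenMeas {N : ℕ} (G : EuclideanSpace ℝ (Fin N) → EuclideanSpace ℝ (Fin N) → ℝ)
    (μ : Measure (EuclideanSpace ℝ (Fin N))) (x : EuclideanSpace ℝ (Fin N)) : ℝ :=
  ∫ y, G x y ∂μ

lemma Mpow_bound {cM2 dy t γ q p Mv : ℝ} (hcM2 : 0 < cM2) (hdy : 0 < dy) (ht : 0 < t)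
    (hp : 0 ≤ p) (hMv : 0 ≤ Mv) (hM : Mv ≤ cM2 * (dy ^ γ / t ^ q)) :
    Mv ^ p ≤ cM2 ^ p * (dy ^ (γ*p) * t ^ (-(q*p))) := by
  have h1 : Mv ^ p ≤ (cM2 * (dy ^ γ / t ^ q)) ^ p := Real.rpow_le_rpow hMv hM hp
  refine h1.trans (le_of_eq ?_)
  rw [div_eq_mul_inv, ← Real.rpow_neg ht.le, Real.mul_rpow hcM2.le (by positivity),
    Real.mul_rpow (by positivity) (by positivity), ← Real.rpow_mul hdy.le,
    ← Real.rpow_mul ht.le, neg_mul]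

lemma GMp_master0 {cG2 cM2 s γ Nr q p r t dx dy Gv Mv : ℝ}
    (hcG2 : 0 < cG2) (hcM2 : 0 < cM2) (hγ : 0 ≤ γ) (hp : 0 ≤ p)
    (hr : 0 < r) (ht : 0 < t) (hdx : 0 < dx) (hdy : 0 < dy)
    (hGv : 0 ≤ Gv) (hMv : 0 ≤ Mv)
    (hG : Gv ≤ cG2 * (r ^ (2*s-Nr) * min (dx/r) 1 ^ γ * min (dy/r) 1 ^ γ))
    (hM : Mv ≤ cM2 * (dy ^ γ / t ^ q)) :
    Gv * Mv ^ p ≤ (cG2 * cM2 ^ p) * (dy ^ (γ*p) * (r ^ (2*s-Nr) * t ^ (-(q*p)))) := by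
  have hm1 : min (dx/r) 1 ^ γ ≤ 1 :=
    Real.rpow_le_one (le_min (by positivity) zero_le_one) (min_le_right _ _) hγ
  have hm2 : min (dy/r) 1 ^ γ ≤ 1 :=
    Real.rpow_le_one (le_min (by positivity) zero_le_one) (min_le_right _ _) hγ
  have hGb : Gv ≤ cG2 * r ^ (2*s-Nr) := by
    refine hG.trans ?_
    have h1 : r ^ (2*s-Nr) * min (dx/r) 1 ^ γ * min (dy/r) 1 ^ γ ≤ r ^ (2*s-Nr) * 1 * 1 := by
      gcongr <;> first | positivity | exact hm1 | exact hm2 | exact Or.inl trivial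
    nlinarith [Real.rpow_pos_of_pos hr (2*s-Nr)]
  have hMb := Mpow_bound hcM2 hdy ht hp hMv hM
  calc Gv * Mv ^ p ≤ (cG2 * r ^ (2*s-Nr)) * (cM2 ^ p * (dy ^ (γ*p) * t ^ (-(q*p)))) :=
        mul_le_mul hGb hMb (Real.rpow_nonneg hMv p) (by positivity)
    _ = (cG2 * cM2 ^ p) * (dy ^ (γ*p) * (r ^ (2*s-Nr) * t ^ (-(q*p)))) := by ring

lemma GMp_master {cG2 cM2 s γ Nr q p r t dx dy Gv Mv : ℝ}
    (hcG2 : 0 < cG2) (hcM2 : 0 < cM2) (hγ : 0 ≤ γ) (hp : 0 ≤ p)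
    (hr : 0 < r) (ht : 0 < t) (hdx : 0 < dx) (hdy : 0 < dy)
    (hGv : 0 ≤ Gv) (hMv : 0 ≤ Mv)
    (hG : Gv ≤ cG2 * (r ^ (2*s-Nr) * min (dx/r) 1 ^ γ * min (dy/r) 1 ^ γ))
    (hM : Mv ≤ cM2 * (dy ^ γ / t ^ q)) :
    Gv * Mv ^ p ≤ (cG2 * cM2 ^ p) *
      (dx ^ γ * (dy ^ (γ*(1+p)) * (r ^ (2*s-Nr-2*γ) * t ^ (-(q*p))))) := by
  have hm1 : min (dx/r) 1 ^ γ ≤ (dx/r) ^ γ :=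
    Real.rpow_le_rpow (le_min (by positivity) zero_le_one) (min_le_left _ _) hγ
  have hm2 : min (dy/r) 1 ^ γ ≤ (dy/r) ^ γ :=
    Real.rpow_le_rpow (le_min (by positivity) zero_le_one) (min_le_left _ _) hγ
  have hGb : Gv ≤ cG2 * (dx ^ γ * (dy ^ γ * r ^ (2*s-Nr-2*γ))) := by
    refine hG.trans ?_
    have h1 : r ^ (2*s-Nr) * min (dx/r) 1 ^ γ * min (dy/r) 1 ^ γ
        ≤ r ^ (2*s-Nr) * (dx/r) ^ γ * (dy/r) ^ γ := by
      gcongr <;> first | positivity | exact hm1 | exact hm2 | exact Or.inl trivial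
    refine (mul_le_mul_of_nonneg_left h1 hcG2.le).trans (le_of_eq ?_)
    rw [Real.div_rpow hdx.le hr.le, Real.div_rpow hdy.le hr.le,
      show (2*s-Nr-2*γ) = (2*s-Nr) + (-γ) + (-γ) by ring,
      Real.rpow_add hr, Real.rpow_add hr, Real.rpow_neg hr.le γ,
      div_eq_mul_inv, div_eq_mul_inv]
    ring
  have hMb := Mpow_bound hcM2 hdy ht hp hMv hM
  calc Gv * Mv ^ p
      ≤ (cG2 * (dx ^ γ * (dy ^ γ * r ^ (2*s-Nr-2*γ)))) * (cM2 ^ p * (dy ^ (γ*p) * t ^ (-(q*p)))) :=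
        mul_le_mul hGb hMb (Real.rpow_nonneg hMv p) (by positivity)
    _ = (cG2 * cM2 ^ p) *
        (dx ^ γ * ((dy ^ γ * dy ^ (γ*p)) * (r ^ (2*s-Nr-2*γ) * t ^ (-(q*p))))) := by ring
    _ = _ := by rw [← Real.rpow_add hdy, show γ + γ*p = γ*(1+p) by ring]

lemma region1_bound {cG2 cM2 s γ Nr q p r t dx dy D Gv Mv : ℝ}
    (hcG2 : 0 < cG2) (hcM2 : 0 < cM2) (hγ : 0 ≤ γ) (hp : 0 ≤ p) (hqp : 0 ≤ q*p)
    (hr : 0 < r) (ht : 0 < t) (hdx : 0 < dx) (hdy : 0 < dy) (hD : 0 < D)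
    (hGv : 0 ≤ Gv) (hMv : 0 ≤ Mv)
    (hG : Gv ≤ cG2 * (r ^ (2*s-Nr) * min (dx/r) 1 ^ γ * min (dy/r) 1 ^ γ))
    (hM : Mv ≤ cM2 * (dy ^ γ / t ^ q))
    (hreg : r ≤ dx/2) (hdxD : dx ≤ D) (htri : D ≤ r + t) (hdyr : dy ≤ dx + r) :
    Gv * Mv ^ p ≤ ((cG2 * cM2 ^ p) * ((dx+dx) ^ (γ*p) * (D/2) ^ (-(q*p)))) * r ^ (2*s-Nr) := by
  have h1 := GMp_master0 hcG2 hcM2 hγ hp hr ht hdx hdy hGv hMv hG hM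
  have hDt : D/2 ≤ t := by linarith
  have hdy2 : dy ≤ dx + dx := by linarith
  have h2 : dy ^ (γ*p) ≤ (dx+dx) ^ (γ*p) := Real.rpow_le_rpow hdy.le hdy2 (by positivity)
  have h3 : t ^ (-(q*p)) ≤ (D/2) ^ (-(q*p)) :=
    Real.rpow_le_rpow_of_nonpos (by positivity) hDt (by linarith)
  calc Gv * Mv ^ p ≤ (cG2 * cM2 ^ p) * (dy ^ (γ*p) * (r ^ (2*s-Nr) * t ^ (-(q*p)))) := h1
    _ ≤ (cG2 * cM2 ^ p) * ((dx+dx) ^ (γ*p) * (r ^ (2*s-Nr) * (D/2) ^ (-(q*p)))) := by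
        have hrp : (0:ℝ) ≤ r ^ (2*s-Nr) := Real.rpow_nonneg hr.le _
        refine mul_le_mul_of_nonneg_left ?_ (by positivity)
        exact mul_le_mul h2 (mul_le_mul_of_nonneg_left h3 hrp)
          (by positivity) (by positivity)
    _ = _ := by ring

lemma region2_bound {cG2 cM2 s γ Nr q p r t dx dy D Gv Mv : ℝ}
    (hcG2 : 0 < cG2) (hcM2 : 0 < cM2) (hγ : 0 ≤ γ) (hp : 0 ≤ p) (hqp : 0 ≤ q*p)
    (hr : 0 < r) (ht : 0 < t) (hdx : 0 < dx) (hdy : 0 < dy) (hD : 0 < D)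
    (hGv : 0 ≤ Gv) (hMv : 0 ≤ Mv)
    (hG : Gv ≤ cG2 * (r ^ (2*s-Nr) * min (dx/r) 1 ^ γ * min (dy/r) 1 ^ γ))
    (hM : Mv ≤ cM2 * (dy ^ γ / t ^ q))
    (hE : 2*s-Nr-2*γ ≤ 0) (hreg : D/2 ≤ r) (hdyt : dy ≤ t) :
    Gv * Mv ^ p ≤ ((cG2 * cM2 ^ p) * (dx ^ γ * (D/2) ^ (2*s-Nr-2*γ))) *
      t ^ (γ*(1+p)-q*p) := by
  have h1 := GMp_master hcG2 hcM2 hγ hp hr ht hdx hdy hGv hMv hG hM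
  have h2 : r ^ (2*s-Nr-2*γ) ≤ (D/2) ^ (2*s-Nr-2*γ) :=
    Real.rpow_le_rpow_of_nonpos (by positivity) hreg hE
  have h3 : dy ^ (γ*(1+p)) ≤ t ^ (γ*(1+p)) := Real.rpow_le_rpow hdy.le hdyt (by positivity)
  calc Gv * Mv ^ p
      ≤ (cG2 * cM2 ^ p) * (dx ^ γ * (dy ^ (γ*(1+p)) * (r ^ (2*s-Nr-2*γ) * t ^ (-(q*p))))) := h1
    _ ≤ (cG2 * cM2 ^ p) * (dx ^ γ * (t ^ (γ*(1+p)) * ((D/2) ^ (2*s-Nr-2*γ) * t ^ (-(q*p))))) := by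
        refine mul_le_mul_of_nonneg_left (mul_le_mul_of_nonneg_left ?_ (by positivity))
          (by positivity)
        exact mul_le_mul h3 (mul_le_mul_of_nonneg_right h2 (by positivity))
          (by positivity) (by positivity)
    _ = ((cG2 * cM2 ^ p) * (dx ^ γ * (D/2) ^ (2*s-Nr-2*γ))) * (t ^ (γ*(1+p)) * t ^ (-(q*p))) := by
        ring
    _ = _ := by rw [← Real.rpow_add ht, show γ*(1+p) + -(q*p) = γ*(1+p)-q*p by ring]

lemma region3_bound {cG2 cM2 s γ Nr q p r t dx dy D κ Gv Mv : ℝ}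
    (hcG2 : 0 < cG2) (hcM2 : 0 < cM2) (hγ : 0 ≤ γ) (hp : 0 ≤ p) (hqp : 0 ≤ q*p)
    (hr : 0 < r) (ht : 0 < t) (hdx : 0 < dx) (hdy : 0 < dy) (hD : 0 < D)
    (hGv : 0 ≤ Gv) (hMv : 0 ≤ Mv)
    (hG : Gv ≤ cG2 * (r ^ (2*s-Nr) * min (dx/r) 1 ^ γ * min (dy/r) 1 ^ γ))
    (hM : Mv ≤ cM2 * (dy ^ γ / t ^ q))
    (hκ0 : 0 ≤ γ*κ) (hκ1p : γ*κ ≤ γ*(1+p))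
    (hdx2r : dx ≤ 2*r) (ht2D : t ≤ 2*D) (hDt : D/2 ≤ t) (hdyr : dy ≤ dx + r)
    (hdyt : dy ≤ t) :
    Gv * Mv ^ p ≤ ((cG2 * cM2 ^ p) * (dx ^ γ * ((3:ℝ) ^ (γ*κ) *
      ((2*D) ^ (γ*(1+p)-γ*κ) * (D/2) ^ (-(q*p)))))) * r ^ (2*s-Nr-2*γ+γ*κ) := by
  have h1 := GMp_master hcG2 hcM2 hγ hp hr ht hdx hdy hGv hMv hG hM
  have hdy3r : dy ≤ 3*r := by linarith
  have hdy2D : dy ≤ 2*D := le_trans hdyt ht2D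
  have hsplit : dy ^ (γ*(1+p)) = dy ^ (γ*κ) * dy ^ (γ*(1+p)-γ*κ) := by
    rw [← Real.rpow_add hdy, show γ*κ + (γ*(1+p)-γ*κ) = γ*(1+p) by ring]
  have h2 : dy ^ (γ*κ) ≤ (3:ℝ) ^ (γ*κ) * r ^ (γ*κ) := by
    rw [← Real.mul_rpow (by norm_num) hr.le]
    exact Real.rpow_le_rpow hdy.le hdy3r hκ0
  have h3 : dy ^ (γ*(1+p)-γ*κ) ≤ (2*D) ^ (γ*(1+p)-γ*κ) :=
    Real.rpow_le_rpow hdy.le hdy2D (by linarith)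
  have h4 : t ^ (-(q*p)) ≤ (D/2) ^ (-(q*p)) :=
    Real.rpow_le_rpow_of_nonpos (by positivity) hDt (by linarith)
  calc Gv * Mv ^ p
      ≤ (cG2 * cM2 ^ p) * (dx ^ γ * (dy ^ (γ*(1+p)) * (r ^ (2*s-Nr-2*γ) * t ^ (-(q*p))))) := h1
    _ ≤ (cG2 * cM2 ^ p) * (dx ^ γ * ((((3:ℝ) ^ (γ*κ) * r ^ (γ*κ)) * (2*D) ^ (γ*(1+p)-γ*κ)) *
          (r ^ (2*s-Nr-2*γ) * (D/2) ^ (-(q*p))))) := by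
        refine mul_le_mul_of_nonneg_left (mul_le_mul_of_nonneg_left ?_ (by positivity))
          (by positivity)
        rw [hsplit]
        exact mul_le_mul (mul_le_mul h2 h3 (by positivity) (by positivity))
          (mul_le_mul_of_nonneg_left h4 (by positivity)) (by positivity) (by positivity)
    _ = ((cG2 * cM2 ^ p) * (dx ^ γ * ((3:ℝ) ^ (γ*κ) *
          ((2*D) ^ (γ*(1+p)-γ*κ) * (D/2) ^ (-(q*p)))))) * (r ^ (2*s-Nr-2*γ) * r ^ (γ*κ)) := by
        ring
    _ = _ := by rw [← Real.rpow_add hr]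

lemma region4_bound {cG2 cM2 s γ Nr q p r t dx dy D μ Gv Mv : ℝ}
    (hcG2 : 0 < cG2) (hcM2 : 0 < cM2) (hγ : 0 ≤ γ) (hp : 0 ≤ p)
    (hr : 0 < r) (ht : 0 < t) (hdx : 0 < dx) (hdy : 0 < dy) (hD : 0 < D)
    (hGv : 0 ≤ Gv) (hMv : 0 ≤ Mv)
    (hG : Gv ≤ cG2 * (r ^ (2*s-Nr) * min (dx/r) 1 ^ γ * min (dy/r) 1 ^ γ))
    (hM : Mv ≤ cM2 * (dy ^ γ / t ^ q))
    (hE : 2*s-Nr-2*γ ≤ 0) (hμE : 2*s-Nr-2*γ+γ*(1+p)-q*p + μ ≤ 0)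
    (h2Dt : 2*D ≤ t) (hrt : t/2 ≤ r) (hdyt : dy ≤ t) :
    Gv * Mv ^ p ≤ ((cG2 * cM2 ^ p) * (dx ^ γ * ((2:ℝ) ^ (-(2*s-Nr-2*γ)) *
      (2*D) ^ (2*s-Nr-2*γ+γ*(1+p)-q*p+μ)))) * t ^ (-μ) := by
  have h1 := GMp_master hcG2 hcM2 hγ hp hr ht hdx hdy hGv hMv hG hM
  have h2 : r ^ (2*s-Nr-2*γ) ≤ (t/2) ^ (2*s-Nr-2*γ) :=
    Real.rpow_le_rpow_of_nonpos (by positivity) hrt hE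
  have h2' : (t/2) ^ (2*s-Nr-2*γ) = t ^ (2*s-Nr-2*γ) * (2:ℝ) ^ (-(2*s-Nr-2*γ)) := by
    rw [div_eq_mul_inv, Real.mul_rpow ht.le (by positivity),
      Real.inv_rpow (by norm_num), ← Real.rpow_neg (by norm_num)]
  have h3 : dy ^ (γ*(1+p)) ≤ t ^ (γ*(1+p)) := Real.rpow_le_rpow hdy.le hdyt (by positivity)
  have hcombine : t ^ (2*s-Nr-2*γ) * (t ^ (γ*(1+p)) * t ^ (-(q*p)))
      = t ^ (-μ) * t ^ (2*s-Nr-2*γ+γ*(1+p)-q*p+μ) := by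
    rw [← Real.rpow_add ht, ← Real.rpow_add ht, ← Real.rpow_add ht]
    congr 1
    ring
  have h5 : t ^ (2*s-Nr-2*γ+γ*(1+p)-q*p+μ) ≤ (2*D) ^ (2*s-Nr-2*γ+γ*(1+p)-q*p+μ) :=
    Real.rpow_le_rpow_of_nonpos (by positivity) h2Dt (by linarith)
  calc Gv * Mv ^ p
      ≤ (cG2 * cM2 ^ p) * (dx ^ γ * (dy ^ (γ*(1+p)) * (r ^ (2*s-Nr-2*γ) * t ^ (-(q*p))))) := h1
    _ ≤ (cG2 * cM2 ^ p) * (dx ^ γ * (t ^ (γ*(1+p)) *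
          ((t ^ (2*s-Nr-2*γ) * (2:ℝ) ^ (-(2*s-Nr-2*γ))) * t ^ (-(q*p))))) := by
        refine mul_le_mul_of_nonneg_left (mul_le_mul_of_nonneg_left ?_ (by positivity))
          (by positivity)
        refine mul_le_mul h3 (mul_le_mul_of_nonneg_right (h2.trans (le_of_eq h2')) ?_)
          (by positivity) (by positivity)
        positivity
    _ = ((cG2 * cM2 ^ p) * (dx ^ γ * (2:ℝ) ^ (-(2*s-Nr-2*γ)))) *
          (t ^ (2*s-Nr-2*γ) * (t ^ (γ*(1+p)) * t ^ (-(q*p)))) := by ring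
    _ = ((cG2 * cM2 ^ p) * (dx ^ γ * (2:ℝ) ^ (-(2*s-Nr-2*γ)))) *
          (t ^ (-μ) * t ^ (2*s-Nr-2*γ+γ*(1+p)-q*p+μ)) := by rw [hcombine]
    _ ≤ ((cG2 * cM2 ^ p) * (dx ^ γ * (2:ℝ) ^ (-(2*s-Nr-2*γ)))) *
          (t ^ (-μ) * (2*D) ^ (2*s-Nr-2*γ+γ*(1+p)-q*p+μ)) := by
        refine mul_le_mul_of_nonneg_left (mul_le_mul_of_nonneg_left h5 ?_) (by positivity)
        positivity
    _ = _ := by ring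

lemma lintegral_ball_rpow {N : ℕ} (hN : 0 < N) (e : ℝ) (he : -(N:ℝ) < e) :
    ∃ C : ℝ, 0 < C ∧ ∀ (c : EuclideanSpace ℝ (Fin N)) (R : ℝ), 0 < R →
      ∫⁻ y in Metric.ball c R, ENNReal.ofReal (dist y c ^ e)
        ≤ ENNReal.ofReal (C * R ^ ((N:ℝ) + e)) := by
  haveI : Nontrivial (EuclideanSpace ℝ (Fin N)) :=
    Module.nontrivial_of_finrank_pos (R := ℝ) (by rw [finrank_euclideanSpace_fin]; exact hN)
  set v : ℝ := (volume (Metric.ball (0 : EuclideanSpace ℝ (Fin N)) 1)).toReal with hv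
  have hvball : volume (Metric.ball (0 : EuclideanSpace ℝ (Fin N)) 1) = ENNReal.ofReal v := by
    rw [hv, ENNReal.ofReal_toReal measure_ball_lt_top.ne]
  have hvpos : 0 < v :=
    ENNReal.toReal_pos (measure_ball_pos _ _ one_pos).ne' measure_ball_lt_top.ne
  have hNe : 0 < (N:ℝ) + e := by linarith
  have hcb : ∀ (c : EuclideanSpace ℝ (Fin N)) (ρ : ℝ), 0 ≤ ρ →
      volume (Metric.closedBall c ρ) = ENNReal.ofReal (ρ ^ ((N:ℝ)) * v) := by
    intro c ρ hρ
    rw [Measure.addHaar_closedBall _ c hρ, hvball, finrank_euclideanSpace_fin,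
      ← ENNReal.ofReal_mul (by positivity), ← Real.rpow_natCast ρ N]
  rcases le_or_gt 0 e with h0e | h0e
  · refine ⟨v, hvpos, fun c R hR => ?_⟩
    calc ∫⁻ y in Metric.ball c R, ENNReal.ofReal (dist y c ^ e)
        ≤ ∫⁻ _ in Metric.ball c R, ENNReal.ofReal (R ^ e) := by
          refine setLIntegral_mono measurable_const fun y hy => ?_
          exact ENNReal.ofReal_le_ofReal
            (Real.rpow_le_rpow dist_nonneg (le_of_lt (mem_ball.mp hy)) h0e)
      _ = ENNReal.ofReal (R ^ e) * volume (Metric.ball c R) := setLIntegral_const _ _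
      _ ≤ ENNReal.ofReal (R ^ e) * volume (Metric.closedBall c R) := by
          gcongr; exact ball_subset_closedBall
      _ = ENNReal.ofReal (v * R ^ ((N:ℝ) + e)) := by
          rw [hcb c R hR.le, ← ENNReal.ofReal_mul (by positivity)]
          congr 1
          rw [Real.rpow_add hR]
          ring
  · set h : ℝ := 2⁻¹ with hh
    have h0 : (0:ℝ) < h := by norm_num
    have h1 : h < 1 := by norm_num
    set q : ℝ := h ^ ((N:ℝ) + e) with hq
    have hq0 : 0 < q := Real.rpow_pos_of_pos h0 _
    have hq1 : q < 1 := Real.rpow_lt_one h0.le h1 hNe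
    have hhk : ∀ (m : ℕ) (a : ℝ), ((h ^ m : ℝ)) ^ a = h ^ ((m:ℝ)*a) := fun m a => by
      rw [← Real.rpow_natCast h m, ← Real.rpow_mul h0.le]
    refine ⟨v * h ^ e * (1 - q)⁻¹, mul_pos (mul_pos hvpos (Real.rpow_pos_of_pos h0 e)) (inv_pos.mpr (by linarith)), fun c R hR => ?_⟩
    set S : ℕ → Set (EuclideanSpace ℝ (Fin N)) :=
      fun k => Metric.closedBall c (R * h ^ k) \ Metric.closedBall c (R * h ^ (k+1)) with hS
    have hcover : Metric.ball c R \ {c} ⊆ ⋃ k, S k := by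
      rintro y ⟨hy, hyc⟩
      have hd0 : 0 < dist y c := dist_pos.mpr (by simpa using hyc)
      have hdR : dist y c < R := mem_ball.mp hy
      have hex : ∃ n : ℕ, R * h ^ n < dist y c := by
        obtain ⟨n, hn⟩ := exists_pow_lt_of_lt_one (x := dist y c / R) (by positivity) h1
        exact ⟨n, by have := (lt_div_iff₀ hR).mp hn; linarith⟩
      classical
      have hspec : R * h ^ (Nat.find hex) < dist y c := Nat.find_spec hex
      have hn0 : Nat.find hex ≠ 0 := by
        intro h0'
        rw [h0'] at hspec; simp at hspec; linarith
      obtain ⟨k, hk⟩ := Nat.exists_eq_succ_of_ne_zero hn0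
      have hmin : ¬ (R * h ^ k < dist y c) := Nat.find_min hex (by omega)
      refine mem_iUnion.mpr ⟨k, mem_closedBall.mpr (le_of_not_gt hmin), fun hmem => ?_⟩
      have h2 := mem_closedBall.mp hmem
      rw [hk] at hspec
      exact absurd h2 (not_le.mpr hspec)
    have hshell : ∀ k : ℕ, ∫⁻ y in S k, ENNReal.ofReal (dist y c ^ e)
        ≤ ENNReal.ofReal ((v * h ^ e * R ^ ((N:ℝ)+e)) * q ^ k) := by
      intro k
      have hrad : (0:ℝ) < R * h ^ (k+1) := by positivity
      calc ∫⁻ y in S k, ENNReal.ofReal (dist y c ^ e)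
          ≤ ∫⁻ _ in S k, ENNReal.ofReal ((R * h ^ (k+1)) ^ e) := by
            refine setLIntegral_mono measurable_const fun y hy => ?_
            refine ENNReal.ofReal_le_ofReal
              (Real.rpow_le_rpow_of_nonpos hrad ?_ h0e.le)
            have := hy.2
            simp only [mem_closedBall, not_le] at this
            exact this.le
        _ = ENNReal.ofReal ((R * h ^ (k+1)) ^ e) * volume (S k) := setLIntegral_const _ _
        _ ≤ ENNReal.ofReal ((R * h ^ (k+1)) ^ e) *
              volume (Metric.closedBall c (R * h ^ k)) := by
            gcongr; exact diff_subset
        _ = ENNReal.ofReal ((R * h ^ (k+1)) ^ e * ((R * h ^ k) ^ ((N:ℝ)) * v)) := by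
            rw [hcb c _ (by positivity), ← ENNReal.ofReal_mul (by positivity)]
        _ = ENNReal.ofReal ((v * h ^ e * R ^ ((N:ℝ)+e)) * q ^ k) := by
            congr 1
            rw [Real.mul_rpow hR.le (by positivity), Real.mul_rpow hR.le (by positivity),
              hhk, hhk, hq, ← Real.rpow_natCast (h ^ ((N:ℝ)+e)) k, ← Real.rpow_mul h0.le,
              Real.rpow_add hR]
            push_cast
            rw [show ((k:ℝ)+1)*e = e + (k:ℝ)*e by ring, Real.rpow_add h0,
              show ((N:ℝ)+e)*(k:ℝ) = (k:ℝ)*(N:ℝ) + (k:ℝ)*e by ring, Real.rpow_add h0]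
            ring
    have hc0 : volume ({c} : Set (EuclideanSpace ℝ (Fin N))) = 0 := by
      have := hcb c 0 le_rfl
      rw [Metric.closedBall_zero] at this
      rw [this, Real.zero_rpow (by positivity : (0:ℝ) < (N:ℝ)).ne', zero_mul, ENNReal.ofReal_zero]
    calc ∫⁻ y in Metric.ball c R, ENNReal.ofReal (dist y c ^ e)
        ≤ ∫⁻ y in (Metric.ball c R \ {c}) ∪ {c}, ENNReal.ofReal (dist y c ^ e) := by
          refine lintegral_mono_set fun y hy => ?_
          by_cases hyc : y = c
          · exact Or.inr (by simp [hyc])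
          · exact Or.inl ⟨hy, hyc⟩
      _ ≤ (∫⁻ y in Metric.ball c R \ {c}, ENNReal.ofReal (dist y c ^ e)) +
            ∫⁻ y in ({c} : Set _), ENNReal.ofReal (dist y c ^ e) := lintegral_union_le _ _ _
      _ = ∫⁻ y in Metric.ball c R \ {c}, ENNReal.ofReal (dist y c ^ e) := by
          rw [setLIntegral_measure_zero _ _ hc0, add_zero]
      _ ≤ ∫⁻ y in ⋃ k, S k, ENNReal.ofReal (dist y c ^ e) := lintegral_mono_set hcover
      _ ≤ ∑' k, ∫⁻ y in S k, ENNReal.ofReal (dist y c ^ e) := lintegral_iUnion_le _ _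
      _ ≤ ∑' k, ENNReal.ofReal ((v * h ^ e * R ^ ((N:ℝ)+e)) * q ^ k) :=
          ENNReal.tsum_le_tsum hshell
      _ = ENNReal.ofReal (v * h ^ e * R ^ ((N:ℝ)+e)) * (1 - ENNReal.ofReal q)⁻¹ := by
          simp_rw [ENNReal.ofReal_mul (by positivity : (0:ℝ) ≤ v * h ^ e * R ^ ((N:ℝ)+e)),
            ENNReal.ofReal_pow hq0.le]
          rw [ENNReal.tsum_mul_left, ENNReal.tsum_geometric]
      _ = ENNReal.ofReal (v * h ^ e * (1 - q)⁻¹ * R ^ ((N:ℝ) + e)) := by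
          rw [show (1:ℝ≥0∞) - ENNReal.ofReal q = ENNReal.ofReal (1 - q) by
              rw [ENNReal.ofReal_sub _ hq0.le, ENNReal.ofReal_one],
            ← ENNReal.ofReal_inv_of_pos (by linarith), ← ENNReal.ofReal_mul (by positivity)]
          congr 1
          ring

lemma half_rpow {D : ℝ} (hD : 0 ≤ D) (a : ℝ) : (D/2) ^ a = D ^ a * 2 ^ (-a) := by
  rw [div_eq_mul_inv, Real.mul_rpow hD (by positivity), Real.inv_rpow (by positivity),
    ← Real.rpow_neg (by positivity)]

lemma final_collect {c dx D R₀ γ a b εq X : ℝ} (hc : 0 ≤ c) (hdx : 0 < dx) (hD : 0 < D)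
    (hdxD : dx ≤ D) (hDR : D ≤ R₀) (ha : 0 ≤ a) (hX : 0 ≤ X)
    (hab : a + b = εq + X) :
    c * (dx ^ (γ + a) * D ^ b) ≤ (c * R₀ ^ X) * (dx ^ γ * D ^ εq) := by
  have h1 : dx ^ (γ+a) = dx^γ * dx^a := Real.rpow_add hdx _ _
  have h2 : dx ^ a ≤ D ^ a := Real.rpow_le_rpow hdx.le hdxD ha
  have h3 : D^a * D^b = D^(εq) * D^X := by
    rw [← Real.rpow_add hD, ← Real.rpow_add hD, hab]
  have h4 : D ^ X ≤ R₀ ^ X := Real.rpow_le_rpow hD.le hDR hX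
  calc c * (dx ^ (γ+a) * D^b) = c * (dx^γ * (dx^a * D^b)) := by rw [h1]; ring
    _ ≤ c * (dx^γ * (D^a * D^b)) := by
        refine mul_le_mul_of_nonneg_left (mul_le_mul_of_nonneg_left ?_
          (Real.rpow_nonneg hdx.le γ)) hc
        exact mul_le_mul_of_nonneg_right h2 (Real.rpow_nonneg hD.le b)
    _ = c * (dx^γ * (D^εq * D^X)) := by rw [h3]
    _ ≤ c * (dx^γ * (D^εq * R₀^X)) := by
        refine mul_le_mul_of_nonneg_left (mul_le_mul_of_nonneg_left ?_
          (Real.rpow_nonneg hdx.le γ)) hc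
        exact mul_le_mul_of_nonneg_left h4 (Real.rpow_nonneg hD.le εq)
    _ = (c * R₀ ^ X) * (dx^γ * D^εq) := by ring

lemma final_collect0 {c dx D R₀ γ b εq X : ℝ} (hc : 0 ≤ c) (hdx : 0 < dx) (hD : 0 < D)
    (hdxD : dx ≤ D) (hDR : D ≤ R₀) (hX : 0 ≤ X) (hab : b = εq + X) :
    c * (dx ^ γ * D ^ b) ≤ (c * R₀ ^ X) * (dx ^ γ * D ^ εq) := by
  have h3 : D^b = D^(εq) * D^X := by rw [← Real.rpow_add hD, hab]
  have h4 : D ^ X ≤ R₀ ^ X := Real.rpow_le_rpow hD.le hDR hX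
  calc c * (dx ^ γ * D^b) = c * (dx^γ * (D^εq * D^X)) := by rw [h3]
    _ ≤ c * (dx^γ * (D^εq * R₀^X)) := by
        refine mul_le_mul_of_nonneg_left (mul_le_mul_of_nonneg_left ?_
          (Real.rpow_nonneg hdx.le γ)) hc
        exact mul_le_mul_of_nonneg_left h4 (Real.rpow_nonneg hD.le εq)
    _ = (c * R₀ ^ X) * (dx^γ * D^εq) := by ring

set_option maxHeartbeats 2000000

/-- assume (G2), joint continuity of `G^Ω` off the diagonal, and that the Martin
kernel `M^Ω` exists and satisfies `M^Ω(x,z) ≍ δ(x)^γ/|x−z|^{N−2s+2γ}`.  Then for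
`1 < p < p* = (N+γ)/(N+γ−2s)` and every `z ∈ ∂Ω`,
`𝔾^Ω[M^Ω(·,z)^p](x)/M^Ω(x,z) → 0` as `Ω ∋ x → z`. -/
theorem statement19
    {N : ℕ} (Ω : Set (EuclideanSpace ℝ (Fin N)))
    (hΩo : IsOpen Ω) (hΩb : Bornology.IsBounded Ω) (hΩne : Ω.Nonempty)
    (s γ : ℝ) (hs : s ∈ Set.Ioc (0 : ℝ) 1) (hγ : γ ∈ Set.Ioc (0 : ℝ) 1)
    (hN : 2 * s < (N : ℝ))
    (G : EuclideanSpace ℝ (Fin N) → EuclideanSpace ℝ (Fin N) → ℝ)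
    (hGmeas : Measurable (Function.uncurry G))
    (hGsym : ∀ x y, G x y = G y x)
    (hGpos : ∀ x ∈ Ω, ∀ y ∈ Ω, x ≠ y → 0 < G x y)
    (hG2 : GreenTwoSided Ω G s γ)
    (hG3 : ContinuousOn (Function.uncurry G)
      ((Ω ×ˢ Ω) \ {p : EuclideanSpace ℝ (Fin N) × EuclideanSpace ℝ (Fin N) | p.1 = p.2}))
    -- the Martin kernel: `M(x,z) = lim_{Ω ∋ y → z} G(x,y)/δ(y)^γ`
    (M : EuclideanSpace ℝ (Fin N) → EuclideanSpace ℝ (Fin N) → ℝ)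
    (hMlim : ∀ x ∈ Ω, ∀ z ∈ frontier Ω,
      Tendsto (fun y => G x y / dB Ω y ^ γ) (𝓝[Ω] z) (𝓝 (M x z)))
    -- two-sided estimate for the Martin kernel
    (hMest : ∃ c₁ c₂ : ℝ, 0 < c₁ ∧ 0 < c₂ ∧ ∀ x ∈ Ω, ∀ z ∈ frontier Ω,
      c₁ * (dB Ω x ^ γ / dist x z ^ ((N : ℝ) - 2 * s + 2 * γ)) ≤ M x z ∧
      M x z ≤ c₂ * (dB Ω x ^ γ / dist x z ^ ((N : ℝ) - 2 * s + 2 * γ)))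
    (p : ℝ) (hp1 : 1 < p) (hp2 : p < ((N : ℝ) + γ) / ((N : ℝ) + γ - 2 * s))
    (z : EuclideanSpace ℝ (Fin N)) (hz : z ∈ frontier Ω) :
    Tendsto (fun x => greenFun Ω G (fun y => M y z ^ p) x / M x z) (𝓝[Ω] z) (𝓝 0) := by
  classical
  obtain ⟨hs0, hs1⟩ := hs
  obtain ⟨hγ0, hγ1⟩ := hγ
  obtain ⟨cG1, cG2, hcG1, hcG2, hG2'⟩ := hG2
  obtain ⟨cM1, cM2, hcM1, hcM2, hMest'⟩ := hMest
  have hp0 : (0:ℝ) < p := by linarith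
  have hNr0 : (0:ℝ) < (N:ℝ) := by linarith
  have hNpos : 0 < N := by exact_mod_cast hNr0
  haveI : Nontrivial (EuclideanSpace ℝ (Fin N)) :=
    Module.nontrivial_of_finrank_pos (R := ℝ) (by rw [finrank_euclideanSpace_fin]; exact hNpos)
  have hΩmeas : MeasurableSet Ω := hΩo.measurableSet
  have hzΩ : z ∉ Ω := fun h => by
    have hz2 := hz
    simp only [frontier, hΩo.interior_eq, Set.mem_diff] at hz2
    exact hz2.2 h
  -- basic positive quantities
  have hq0 : (0:ℝ) < (N:ℝ) - 2*s + 2*γ := by linarith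
  have hβ0 : (0:ℝ) < (N:ℝ) + γ - 2*s := by linarith
  have hβp : ((N:ℝ) + γ - 2*s) * p < (N:ℝ) + γ := by
    have h := (lt_div_iff₀ hβ0).mp hp2
    linarith [h]
  -- the auxiliary exponent κ
  set κ : ℝ := max (2 - s/γ) 0 with hκdef
  have hκ0 : 0 ≤ κ := le_max_right _ _
  have hκle : κ ≤ 1 + p := by
    refine max_le ?_ (by linarith)
    have hsγ : 0 < s/γ := by positivity
    linarith
  have hγκpos : 0 < 2*s - 2*γ + γ*κ := by
    rcases le_or_gt (2 - s/γ) 0 with hc | hc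
    · rw [hκdef, max_eq_right hc]
      have h2 : (2:ℝ) ≤ s/γ := by linarith
      have h2γ : 2*γ ≤ s := (le_div_iff₀ hγ0).mp h2
      linarith
    · rw [hκdef, max_eq_left hc.le]
      have hγne : γ ≠ 0 := ne_of_gt hγ0
      have hid : γ * (2 - s/γ) = 2*γ - s := by field_simp
      rw [hid]; linarith
  -- the auxiliary exponent μ and the final exponent ε
  set μ : ℝ := (((N:ℝ) + γ - 2*s)*p - γ + min ((N:ℝ)) (((N:ℝ) + γ - 2*s)*(1+p)))/2 with hμdef
  have hμlt : ((N:ℝ) + γ - 2*s)*p - γ < min ((N:ℝ)) (((N:ℝ) + γ - 2*s)*(1+p)) := by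
    refine lt_min (by linarith) (by nlinarith [hβp])
  have hμ1 : ((N:ℝ) + γ - 2*s)*p - γ < μ := by
    rw [hμdef]; linarith
  have hμN : μ < (N:ℝ) := by
    have h1 := min_le_left ((N:ℝ)) (((N:ℝ) + γ - 2*s)*(1+p))
    rw [hμdef]; linarith
  have hμβ : μ < ((N:ℝ) + γ - 2*s)*(1+p) := by
    have h1 := min_le_right ((N:ℝ)) (((N:ℝ) + γ - 2*s)*(1+p))
    rw [hμdef]; linarith
  set ε : ℝ := μ + γ - ((N:ℝ) + γ - 2*s)*p with hεdef
  have hε0 : 0 < ε := by rw [hεdef]; linarith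
  set X : ℝ := (N:ℝ) + γ - ((N:ℝ) + γ - 2*s)*p - ε with hXdef
  have hX0 : 0 ≤ X := by rw [hXdef, hεdef]; linarith
  -- ball integral constants
  obtain ⟨C1, hC1, hI1⟩ := lintegral_ball_rpow hNpos (2*s - (N:ℝ)) (by linarith)
  obtain ⟨C2, hC2, hI2⟩ := lintegral_ball_rpow hNpos (γ*(1+p) - ((N:ℝ) - 2*s + 2*γ)*p)
    (by linarith [hβp])
  obtain ⟨C3, hC3, hI3⟩ := lintegral_ball_rpow hNpos (2*s - (N:ℝ) - 2*γ + γ*κ) (by linarith)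
  obtain ⟨C4, hC4, hI4⟩ := lintegral_ball_rpow hNpos (-μ) (by linarith)
  -- a large radius R₀ with Ω ⊆ ball z R₀
  obtain ⟨R', hR'⟩ := hΩb.subset_closedBall z
  set R₀ : ℝ := max R' 0 + 1 with hR₀def
  have hR₀pos : (0:ℝ) < R₀ := by
    have := le_max_right R' 0
    rw [hR₀def]; linarith
  have hΩsub : Ω ⊆ Metric.ball z R₀ := by
    intro w hw
    have h1 : dist w z ≤ R' := mem_closedBall.mp (hR' hw)
    have h2 := le_max_left R' 0
    rw [mem_ball, hR₀def]; linarith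
  -- measurable surrogate for M · z
  obtain ⟨u, hum, hut⟩ := mem_closure_iff_seq_limit.mp (frontier_subset_closure hz)
  set g : EuclideanSpace ℝ (Fin N) → ℝ := fun y => if y ∈ Ω then M y z else 0 with hgdef
  have hgmeas : Measurable g := by
    refine measurable_of_tendsto_metrizable' atTop
      (f := fun n y => if y ∈ Ω then G y (u n) / dB Ω (u n) ^ γ else 0)
      (fun n => Measurable.ite hΩmeas
        ((hGmeas.comp (measurable_id.prodMk measurable_const)).div_const _) measurable_const)
      (tendsto_pi_nhds.mpr ?_)
    intro y
    by_cases hy : y ∈ Ω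
    · simp only [hgdef, hy, if_true]
      exact (hMlim y hy z hz).comp
        (tendsto_nhdsWithin_iff.mpr ⟨hut, Eventually.of_forall hum⟩)
    · simp only [hgdef, hy, if_false]
      exact tendsto_const_nhds

  -- x-independent constants
  set K0 : ℝ := cG2 * cM2 ^ p with hK0def
  have hK0 : 0 < K0 := by rw [hK0def]; positivity
  set c1 : ℝ := K0 * ((2:ℝ) ^ (γ*p) * (2:ℝ) ^ (((N:ℝ)-2*s+2*γ)*p)) * C1 with hc1def
  set c2 : ℝ := K0 * (2:ℝ) ^ (-(2*s-(N:ℝ)-2*γ)) * C2 with hc2def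
  set c3 : ℝ := K0 * ((3:ℝ)^(γ*κ) * ((2:ℝ)^(γ*(1+p)-γ*κ) *
    ((2:ℝ)^(((N:ℝ)-2*s+2*γ)*p) * (4:ℝ)^((N:ℝ)+(2*s-(N:ℝ)-2*γ+γ*κ))))) * C3 with hc3def
  set c4 : ℝ := K0 * ((2:ℝ)^(-(2*s-(N:ℝ)-2*γ)) *
    ((2:ℝ)^(2*s-(N:ℝ)-2*γ+γ*(1+p)-((N:ℝ)-2*s+2*γ)*p+μ) * (C4 * R₀^((N:ℝ)+ -μ)))) with hc4def
  have hc1p : 0 < c1 := by rw [hc1def]; positivity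
  have hc2p : 0 < c2 := by rw [hc2def]; positivity
  have hc3p : 0 < c3 := by rw [hc3def]; positivity
  have hc4p : 0 < c4 := by rw [hc4def]; positivity
  set Cstar : ℝ := c1 * R₀ ^ X + c2 * R₀ ^ X + c3 * R₀ ^ X + c4 * R₀ ^ (0:ℝ) with hCstardef
  have hCstar : 0 < Cstar := by rw [hCstardef]; positivity
  have hΩfr_ne : (frontier Ω).Nonempty := ⟨z, hz⟩
  have hdBpos : ∀ w ∈ Ω, 0 < dB Ω w := by
    intro w hw
    refine (isClosed_frontier.notMem_iff_infDist_pos hΩfr_ne).mp fun hmem => ?_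
    simp only [frontier, hΩo.interior_eq, Set.mem_diff] at hmem
    exact hmem.2 hw
  have hdistz : ∀ w ∈ Ω, 0 < dist w z := fun w hw =>
    dist_pos.mpr (fun hwz => hzΩ (hwz ▸ hw))
  have hqppos : (0:ℝ) ≤ ((N:ℝ)-2*s+2*γ)*p := by positivity
  have hMnn : ∀ y ∈ Ω, 0 ≤ M y z := by
    intro y hy
    refine le_trans ?_ (hMest' y hy z hz).1
    have h1 := hdBpos y hy
    have h2 := hdistz y hy
    positivity
  have haeneq : ∀ x : EuclideanSpace ℝ (Fin N),
      ∀ᵐ y : EuclideanSpace ℝ (Fin N) ∂volume, y ≠ x := by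
    intro x
    rw [ae_iff]
    have hset : {y : EuclideanSpace ℝ (Fin N) | ¬ y ≠ x} = {x} := by ext w; simp
    rw [hset]
    exact measure_singleton x
  have hnnae : ∀ x ∈ Ω, 0 ≤ᵐ[volume.restrict Ω] fun y => G x y * M y z ^ p := by
    intro x hx
    refine (ae_restrict_iff' hΩmeas).mpr ?_
    filter_upwards [haeneq x] with y hyne hyΩ
    exact mul_nonneg (hGpos x hx y hyΩ hyne.symm).le (Real.rpow_nonneg (hMnn y hyΩ) _)
  -- the key upper bound for the numerator
  have key : ∀ x ∈ Ω, greenFun Ω G (fun y => M y z ^ p) x ≤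
      Cstar * (dB Ω x ^ γ * dist x z ^ (ε - ((N:ℝ) - 2*s + 2*γ))) := by
    intro x hx
    have hdx : 0 < dB Ω x := hdBpos x hx
    have hD : 0 < dist x z := hdistz x hx
    have hdxD : dB Ω x ≤ dist x z := Metric.infDist_le_dist_of_mem hz
    have hDR : dist x z ≤ R₀ := (mem_ball.mp (hΩsub hx)).le
    -- pointwise facts for y ∈ Ω, y ≠ x
    have hfacts : ∀ y ∈ Ω, y ≠ x →
        (0 < dist y x ∧ 0 < dist y z ∧ 0 < dB Ω y ∧ dB Ω y ≤ dist y z ∧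
         dB Ω y ≤ dB Ω x + dist y x ∧ dist x z ≤ dist y x + dist y z ∧
         dist y z ≤ dist y x + dist x z ∧ 0 ≤ G x y ∧ 0 ≤ M y z ∧
         G x y ≤ cG2 * (dist y x ^ (2*s-(N:ℝ)) * min (dB Ω x / dist y x) 1 ^ γ *
           min (dB Ω y / dist y x) 1 ^ γ) ∧
         M y z ≤ cM2 * (dB Ω y ^ γ / dist y z ^ ((N:ℝ) - 2*s + 2*γ))) := by
      intro y hy hyne
      have hGb := (hG2' x hx y hy hyne.symm).2
      unfold greenRef at hGb
      rw [dist_comm x y] at hGb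
      have htri1 : dist x z ≤ dist y x + dist y z := by
        have := dist_triangle x y z
        have h2 := dist_comm x y
        linarith
      have htri2 : dist y z ≤ dist y x + dist x z := by
        have := dist_triangle y x z
        linarith
      have hlip : dB Ω y ≤ dB Ω x + dist y x := Metric.infDist_le_infDist_add_dist
      exact ⟨dist_pos.mpr hyne, hdistz y hy, hdBpos y hy,
        Metric.infDist_le_dist_of_mem hz, hlip, htri1, htri2,
        (hGpos x hx y hy hyne.symm).le, hMnn y hy, hGb, (hMest' y hy z hz).2⟩
    -- region sets
    set T1 : Set (EuclideanSpace ℝ (Fin N)) := {y | dist y x ≤ dB Ω x/2} with hT1def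
    set T2 : Set (EuclideanSpace ℝ (Fin N)) :=
      {y | ¬ dist y x ≤ dB Ω x/2 ∧ dist y z ≤ dist x z/2} with hT2def
    set T3 : Set (EuclideanSpace ℝ (Fin N)) :=
      {y | ¬ dist y x ≤ dB Ω x/2 ∧ ¬ dist y z ≤ dist x z/2 ∧ dist y z ≤ 2*dist x z} with hT3def
    set T4 : Set (EuclideanSpace ℝ (Fin N)) :=
      {y | ¬ dist y x ≤ dB Ω x/2 ∧ ¬ dist y z ≤ dist x z/2 ∧ ¬ dist y z ≤ 2*dist x z} with hT4def
    have hcover : Ω ⊆ (Ω ∩ T1) ∪ ((Ω ∩ T2) ∪ ((Ω ∩ T3) ∪ (Ω ∩ T4))) := by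
      intro y hy
      simp only [hT1def, hT2def, hT3def, hT4def, Set.mem_union, Set.mem_inter_iff,
        Set.mem_setOf_eq]
      by_cases h1 : dist y x ≤ dB Ω x/2
      · exact Or.inl ⟨hy, h1⟩
      · by_cases h2 : dist y z ≤ dist x z/2
        · exact Or.inr (Or.inl ⟨hy, h1, h2⟩)
        · by_cases h3 : dist y z ≤ 2*dist x z
          · exact Or.inr (Or.inr (Or.inl ⟨hy, h1, h2, h3⟩))
          · exact Or.inr (Or.inr (Or.inr ⟨hy, h1, h2, h3⟩))
    -- the constants A_i and bounds B_i
    set A1 : ℝ := K0 * ((dB Ω x + dB Ω x) ^ (γ*p) *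
      (dist x z/2) ^ (-(((N:ℝ)-2*s+2*γ)*p))) with hA1def
    set A2 : ℝ := K0 * (dB Ω x ^ γ * (dist x z/2) ^ (2*s-(N:ℝ)-2*γ)) with hA2def
    set A3 : ℝ := K0 * (dB Ω x ^ γ * ((3:ℝ) ^ (γ*κ) *
      ((2*dist x z) ^ (γ*(1+p)-γ*κ) * (dist x z/2) ^ (-(((N:ℝ)-2*s+2*γ)*p))))) with hA3def
    set A4 : ℝ := K0 * (dB Ω x ^ γ * ((2:ℝ) ^ (-(2*s-(N:ℝ)-2*γ)) *
      (2*dist x z) ^ (2*s-(N:ℝ)-2*γ+γ*(1+p)-((N:ℝ)-2*s+2*γ)*p+μ))) with hA4def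
    have hA1nn : 0 ≤ A1 := by rw [hA1def, hK0def]; positivity
    have hA2nn : 0 ≤ A2 := by rw [hA2def, hK0def]; positivity
    have hA3nn : 0 ≤ A3 := by rw [hA3def, hK0def]; positivity
    have hA4nn : 0 ≤ A4 := by rw [hA4def, hK0def]; positivity
    set B1 : ℝ := A1 * (C1 * dB Ω x ^ ((N:ℝ) + (2*s-(N:ℝ)))) with hB1def
    set B2 : ℝ := A2 * (C2 * dist x z ^ ((N:ℝ) + (γ*(1+p) - ((N:ℝ)-2*s+2*γ)*p))) with hB2def
    set B3 : ℝ := A3 * (C3 * (4*dist x z) ^ ((N:ℝ) + (2*s-(N:ℝ)-2*γ+γ*κ))) with hB3def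
    set B4 : ℝ := A4 * (C4 * R₀ ^ ((N:ℝ) + -μ)) with hB4def
    have hB1nn : 0 ≤ B1 := by rw [hB1def]; positivity
    have hB2nn : 0 ≤ B2 := by rw [hB2def]; positivity
    have hB3nn : 0 ≤ B3 := by rw [hB3def]; positivity
    have hB4nn : 0 ≤ B4 := by rw [hB4def]; positivity
    -- region 1 integral bound
    have hIb1 : ∫⁻ y in Ω ∩ T1, ENNReal.ofReal (G x y * M y z ^ p) ≤ ENNReal.ofReal B1 := by
      calc ∫⁻ y in Ω ∩ T1, ENNReal.ofReal (G x y * M y z ^ p)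
          ≤ ∫⁻ y in Ω ∩ T1, ENNReal.ofReal (A1 * dist y x ^ (2*s-(N:ℝ))) := by
            refine setLIntegral_mono_ae (Measurable.aemeasurable (by fun_prop)) ?_
            filter_upwards [haeneq x] with y hyne hymem
            obtain ⟨hyΩ, hyT⟩ := hymem
            obtain ⟨hr, ht, hdy, hdyt, hlip, htri1, htri2, hGv, hMv, hGb, hMb⟩ :=
              hfacts y hyΩ hyne
            have hreg : dist y x ≤ dB Ω x/2 := hyT
            refine ENNReal.ofReal_le_ofReal ?_
            rw [hA1def, hK0def]
            exact region1_bound hcG2 hcM2 hγ0.le hp0.le hqppos hr ht hdx hdy hD hGv hMv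
              hGb hMb hreg hdxD htri1 hlip
        _ = ENNReal.ofReal A1 * ∫⁻ y in Ω ∩ T1, ENNReal.ofReal (dist y x ^ (2*s-(N:ℝ))) := by
            simp_rw [ENNReal.ofReal_mul hA1nn]
            exact lintegral_const_mul _ (by fun_prop)
        _ ≤ ENNReal.ofReal A1 *
              ∫⁻ y in Metric.ball x (dB Ω x), ENNReal.ofReal (dist y x ^ (2*s-(N:ℝ))) := by
            refine mul_le_mul_right (lintegral_mono_set ?_) _
            rintro y ⟨hyΩ, hyT⟩
            have h1 : dist y x ≤ dB Ω x / 2 := hyT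
            exact mem_ball.mpr (by linarith)
        _ ≤ ENNReal.ofReal A1 * ENNReal.ofReal (C1 * dB Ω x ^ ((N:ℝ) + (2*s-(N:ℝ)))) :=
            mul_le_mul_right (hI1 x (dB Ω x) hdx) _
        _ = ENNReal.ofReal B1 := by rw [hB1def, ← ENNReal.ofReal_mul hA1nn]
    have hIb2 : ∫⁻ y in Ω ∩ T2, ENNReal.ofReal (G x y * M y z ^ p) ≤ ENNReal.ofReal B2 := by
      calc ∫⁻ y in Ω ∩ T2, ENNReal.ofReal (G x y * M y z ^ p)
          ≤ ∫⁻ y in Ω ∩ T2, ENNReal.ofReal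
              (A2 * dist y z ^ (γ*(1+p) - ((N:ℝ)-2*s+2*γ)*p)) := by
            refine setLIntegral_mono_ae (Measurable.aemeasurable (by fun_prop)) ?_
            filter_upwards [haeneq x] with y hyne hymem
            obtain ⟨hyΩ, hyT1, hyT2⟩ := hymem
            obtain ⟨hr, ht, hdy, hdyt, hlip, htri1, htri2, hGv, hMv, hGb, hMb⟩ :=
              hfacts y hyΩ hyne
            have hreg : dist x z/2 ≤ dist y x := by
              push_neg at hyT1
              linarith
            refine ENNReal.ofReal_le_ofReal ?_
            rw [hA2def, hK0def]
            exact region2_bound hcG2 hcM2 hγ0.le hp0.le hqppos hr ht hdx hdy hD hGv hMv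
              hGb hMb (by linarith) hreg hdyt
        _ = ENNReal.ofReal A2 * ∫⁻ y in Ω ∩ T2, ENNReal.ofReal
              (dist y z ^ (γ*(1+p) - ((N:ℝ)-2*s+2*γ)*p)) := by
            simp_rw [ENNReal.ofReal_mul hA2nn]
            exact lintegral_const_mul _ (by fun_prop)
        _ ≤ ENNReal.ofReal A2 * ∫⁻ y in Metric.ball z (dist x z), ENNReal.ofReal
              (dist y z ^ (γ*(1+p) - ((N:ℝ)-2*s+2*γ)*p)) := by
            refine mul_le_mul_right (lintegral_mono_set ?_) _
            rintro y ⟨hyΩ, hyT1, hyT2⟩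
            have h1 : dist y z ≤ dist x z / 2 := hyT2
            exact mem_ball.mpr (by linarith)
        _ ≤ ENNReal.ofReal A2 * ENNReal.ofReal
              (C2 * dist x z ^ ((N:ℝ) + (γ*(1+p) - ((N:ℝ)-2*s+2*γ)*p))) :=
            mul_le_mul_right (hI2 z (dist x z) hD) _
        _ = ENNReal.ofReal B2 := by rw [hB2def, ← ENNReal.ofReal_mul hA2nn]
    have hIb3 : ∫⁻ y in Ω ∩ T3, ENNReal.ofReal (G x y * M y z ^ p) ≤ ENNReal.ofReal B3 := by
      calc ∫⁻ y in Ω ∩ T3, ENNReal.ofReal (G x y * M y z ^ p)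
          ≤ ∫⁻ y in Ω ∩ T3, ENNReal.ofReal
              (A3 * dist y x ^ (2*s-(N:ℝ)-2*γ+γ*κ)) := by
            refine setLIntegral_mono_ae (Measurable.aemeasurable (by fun_prop)) ?_
            filter_upwards [haeneq x] with y hyne hymem
            obtain ⟨hyΩ, hyT1, hyT2, hyT3⟩ := hymem
            obtain ⟨hr, ht, hdy, hdyt, hlip, htri1, htri2, hGv, hMv, hGb, hMb⟩ :=
              hfacts y hyΩ hyne
            push_neg at hyT1 hyT2
            refine ENNReal.ofReal_le_ofReal ?_
            rw [hA3def, hK0def]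
            exact region3_bound hcG2 hcM2 hγ0.le hp0.le hqppos hr ht hdx hdy hD hGv hMv
              hGb hMb (by positivity) (mul_le_mul_of_nonneg_left hκle hγ0.le)
              (by linarith) hyT3 (by linarith) hlip hdyt
        _ = ENNReal.ofReal A3 * ∫⁻ y in Ω ∩ T3, ENNReal.ofReal
              (dist y x ^ (2*s-(N:ℝ)-2*γ+γ*κ)) := by
            simp_rw [ENNReal.ofReal_mul hA3nn]
            exact lintegral_const_mul _ (by fun_prop)
        _ ≤ ENNReal.ofReal A3 * ∫⁻ y in Metric.ball x (4*dist x z), ENNReal.ofReal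
              (dist y x ^ (2*s-(N:ℝ)-2*γ+γ*κ)) := by
            refine mul_le_mul_right (lintegral_mono_set ?_) _
            rintro y ⟨hyΩ, hyT1, hyT2, hyT3⟩
            have h1 : dist y z ≤ 2*dist x z := hyT3
            have h2 : dist y x ≤ dist y z + dist z x := dist_triangle y z x
            have h3 : dist z x = dist x z := dist_comm z x
            exact mem_ball.mpr (by linarith)
        _ ≤ ENNReal.ofReal A3 * ENNReal.ofReal
              (C3 * (4*dist x z) ^ ((N:ℝ) + (2*s-(N:ℝ)-2*γ+γ*κ))) :=
            mul_le_mul_right (hI3 x (4*dist x z) (by positivity)) _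
        _ = ENNReal.ofReal B3 := by rw [hB3def, ← ENNReal.ofReal_mul hA3nn]
    have hIb4 : ∫⁻ y in Ω ∩ T4, ENNReal.ofReal (G x y * M y z ^ p) ≤ ENNReal.ofReal B4 := by
      calc ∫⁻ y in Ω ∩ T4, ENNReal.ofReal (G x y * M y z ^ p)
          ≤ ∫⁻ y in Ω ∩ T4, ENNReal.ofReal (A4 * dist y z ^ (-μ)) := by
            refine setLIntegral_mono_ae (Measurable.aemeasurable (by fun_prop)) ?_
            filter_upwards [haeneq x] with y hyne hymem
            obtain ⟨hyΩ, hyT1, hyT2, hyT3⟩ := hymem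
            obtain ⟨hr, ht, hdy, hdyt, hlip, htri1, htri2, hGv, hMv, hGb, hMb⟩ :=
              hfacts y hyΩ hyne
            push_neg at hyT1 hyT2 hyT3
            have hμE : 2*s-(N:ℝ)-2*γ+γ*(1+p)-((N:ℝ)-2*s+2*γ)*p + μ ≤ 0 := by linarith [hμβ]
            refine ENNReal.ofReal_le_ofReal ?_
            rw [hA4def, hK0def]
            exact region4_bound hcG2 hcM2 hγ0.le hp0.le hr ht hdx hdy hD hGv hMv
              hGb hMb (by linarith) hμE hyT3.le (by linarith) hdyt
        _ = ENNReal.ofReal A4 * ∫⁻ y in Ω ∩ T4, ENNReal.ofReal (dist y z ^ (-μ)) := by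
            simp_rw [ENNReal.ofReal_mul hA4nn]
            exact lintegral_const_mul _ (by fun_prop)
        _ ≤ ENNReal.ofReal A4 * ∫⁻ y in Metric.ball z R₀, ENNReal.ofReal (dist y z ^ (-μ)) := by
            refine mul_le_mul_right (lintegral_mono_set ?_) _
            rintro y ⟨hyΩ, hyT⟩
            exact hΩsub hyΩ
        _ ≤ ENNReal.ofReal A4 * ENNReal.ofReal (C4 * R₀ ^ ((N:ℝ) + -μ)) :=
            mul_le_mul_right (hI4 z R₀ hR₀pos) _
        _ = ENNReal.ofReal B4 := by rw [hB4def, ← ENNReal.ofReal_mul hA4nn]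
    -- sum of regional bounds
    have hnum : ∫⁻ y in Ω, ENNReal.ofReal (G x y * M y z ^ p)
        ≤ ENNReal.ofReal (B1 + (B2 + (B3 + B4))) := by
      calc ∫⁻ y in Ω, ENNReal.ofReal (G x y * M y z ^ p)
          ≤ ∫⁻ y in (Ω ∩ T1) ∪ ((Ω ∩ T2) ∪ ((Ω ∩ T3) ∪ (Ω ∩ T4))),
              ENNReal.ofReal (G x y * M y z ^ p) := lintegral_mono_set hcover
        _ ≤ (∫⁻ y in Ω ∩ T1, ENNReal.ofReal (G x y * M y z ^ p)) +
              ∫⁻ y in (Ω ∩ T2) ∪ ((Ω ∩ T3) ∪ (Ω ∩ T4)),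
                ENNReal.ofReal (G x y * M y z ^ p) := lintegral_union_le _ _ _
        _ ≤ (∫⁻ y in Ω ∩ T1, ENNReal.ofReal (G x y * M y z ^ p)) +
              ((∫⁻ y in Ω ∩ T2, ENNReal.ofReal (G x y * M y z ^ p)) +
                ∫⁻ y in (Ω ∩ T3) ∪ (Ω ∩ T4), ENNReal.ofReal (G x y * M y z ^ p)) :=
            add_le_add_right (lintegral_union_le _ _ _) _
        _ ≤ (∫⁻ y in Ω ∩ T1, ENNReal.ofReal (G x y * M y z ^ p)) +
              ((∫⁻ y in Ω ∩ T2, ENNReal.ofReal (G x y * M y z ^ p)) +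
                ((∫⁻ y in Ω ∩ T3, ENNReal.ofReal (G x y * M y z ^ p)) +
                  ∫⁻ y in Ω ∩ T4, ENNReal.ofReal (G x y * M y z ^ p))) :=
            add_le_add_right (add_le_add_right (lintegral_union_le _ _ _) _) _
        _ ≤ ENNReal.ofReal B1 + (ENNReal.ofReal B2 + (ENNReal.ofReal B3 + ENNReal.ofReal B4)) :=
            add_le_add hIb1 (add_le_add hIb2 (add_le_add hIb3 hIb4))
        _ = ENNReal.ofReal (B1 + (B2 + (B3 + B4))) := by
            rw [← ENNReal.ofReal_add hB3nn hB4nn,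
              ← ENNReal.ofReal_add hB2nn (by positivity),
              ← ENNReal.ofReal_add hB1nn (by positivity)]
    -- regional real bounds
    have hW : (0:ℝ) ≤ dB Ω x ^ γ * dist x z ^ (ε - ((N:ℝ) - 2*s + 2*γ)) := by positivity
    have hbd1 : B1 ≤ (c1 * R₀ ^ X) * (dB Ω x ^ γ * dist x z ^ (ε - ((N:ℝ) - 2*s + 2*γ))) := by
      have hga : γ*1 ≤ γ*p := mul_le_mul_of_nonneg_left hp1.le hγ0.le
      have heq : B1 = c1 * (dB Ω x ^ (γ + (γ*p + 2*s - γ)) *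
          dist x z ^ (-(((N:ℝ)-2*s+2*γ)*p))) := by
        rw [hB1def, hA1def, hc1def, hK0def,
          show (N:ℝ) + (2*s-(N:ℝ)) = 2*s by ring,
          show dB Ω x + dB Ω x = 2*dB Ω x by ring,
          Real.mul_rpow (by norm_num) hdx.le,
          half_rpow hD.le, neg_neg,
          show γ + (γ*p + 2*s - γ) = γ*p + 2*s by ring,
          Real.rpow_add hdx (γ*p) (2*s)]
        ring
      rw [heq]
      refine final_collect (by positivity) hdx hD hdxD hDR (by linarith) hX0 ?_
      rw [hXdef]; ring
    have hbd2 : B2 ≤ (c2 * R₀ ^ X) * (dB Ω x ^ γ * dist x z ^ (ε - ((N:ℝ) - 2*s + 2*γ))) := by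
      have heq : B2 = c2 * (dB Ω x ^ γ * dist x z ^
          ((2*s-(N:ℝ)-2*γ) + ((N:ℝ) + (γ*(1+p)-((N:ℝ)-2*s+2*γ)*p)))) := by
        rw [hB2def, hA2def, hc2def, hK0def, half_rpow hD.le,
          Real.rpow_add hD (2*s-(N:ℝ)-2*γ) ((N:ℝ) + (γ*(1+p)-((N:ℝ)-2*s+2*γ)*p))]
        ring
      rw [heq]
      refine final_collect0 (by positivity) hdx hD hdxD hDR hX0 ?_
      rw [hXdef]; ring
    have hbd3 : B3 ≤ (c3 * R₀ ^ X) * (dB Ω x ^ γ * dist x z ^ (ε - ((N:ℝ) - 2*s + 2*γ))) := by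
      have heq : B3 = c3 * (dB Ω x ^ γ * dist x z ^
          ((γ*(1+p)-γ*κ) + (-(((N:ℝ)-2*s+2*γ)*p)) + ((N:ℝ)+(2*s-(N:ℝ)-2*γ+γ*κ)))) := by
        rw [hB3def, hA3def, hc3def, hK0def,
          Real.mul_rpow (by norm_num : (0:ℝ) ≤ 2) hD.le,
          Real.mul_rpow (by norm_num : (0:ℝ) ≤ 4) hD.le,
          half_rpow hD.le, neg_neg,
          Real.rpow_add hD ((γ*(1+p)-γ*κ) + (-(((N:ℝ)-2*s+2*γ)*p)))
            ((N:ℝ)+(2*s-(N:ℝ)-2*γ+γ*κ)),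
          Real.rpow_add hD (γ*(1+p)-γ*κ) (-(((N:ℝ)-2*s+2*γ)*p))]
        ring
      rw [heq]
      refine final_collect0 (by positivity) hdx hD hdxD hDR hX0 ?_
      rw [hXdef]; ring
    have hbd4 : B4 ≤ (c4 * R₀ ^ (0:ℝ)) * (dB Ω x ^ γ *
        dist x z ^ (ε - ((N:ℝ) - 2*s + 2*γ))) := by
      have heq : B4 = c4 * (dB Ω x ^ γ * dist x z ^
          (2*s-(N:ℝ)-2*γ+γ*(1+p)-((N:ℝ)-2*s+2*γ)*p+μ)) := by
        rw [hB4def, hA4def, hc4def, hK0def,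
          Real.mul_rpow (by norm_num : (0:ℝ) ≤ 2) hD.le]
        ring
      rw [heq]
      refine final_collect0 (by positivity) hdx hD hdxD hDR le_rfl ?_
      rw [hεdef]; ring
    have hBsum : B1 + (B2 + (B3 + B4)) ≤
        Cstar * (dB Ω x ^ γ * dist x z ^ (ε - ((N:ℝ) - 2*s + 2*γ))) := by
      rw [hCstardef]
      linarith [hbd1, hbd2, hbd3, hbd4]
    -- measurability and nonnegativity of the integrand
    have hGxmeas : Measurable fun y => G x y :=
      hGmeas.comp (measurable_const.prodMk measurable_id)
    have hmeasx : AEStronglyMeasurable (fun y => G x y * M y z ^ p) (volume.restrict Ω) := by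
      have h1 : Measurable fun y => G x y * g y ^ p := by fun_prop
      refine h1.aestronglyMeasurable.congr ?_
      refine (ae_restrict_iff' hΩmeas).mpr (Eventually.of_forall fun y hy => ?_)
      simp only [hgdef]
      rw [if_pos hy]
    -- conclude
    have hint : greenFun Ω G (fun y => M y z ^ p) x
        = (∫⁻ y in Ω, ENNReal.ofReal (G x y * M y z ^ p)).toReal := by
      simp only [greenFun]
      exact integral_eq_lintegral_of_nonneg_ae (hnnae x hx) hmeasx
    rw [hint]
    refine ENNReal.toReal_le_of_le_ofReal (by positivity) ?_
    exact hnum.trans (ENNReal.ofReal_le_ofReal hBsum)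
  -- positivity of M and the final squeeze argument
  have hMpos : ∀ x ∈ Ω, 0 < M x z := by
    intro x hx
    have h1 := hdBpos x hx
    have h2 := hdistz x hx
    exact lt_of_lt_of_le (by positivity) (hMest' x hx z hz).1
  have hratio_nonneg : ∀ x ∈ Ω, 0 ≤ greenFun Ω G (fun y => M y z ^ p) x / M x z := by
    intro x hx
    refine div_nonneg ?_ (hMpos x hx).le
    have h1 := integral_nonneg_of_ae (hnnae x hx)
    simpa [greenFun] using h1
  have hub : ∀ x ∈ Ω, greenFun Ω G (fun y => M y z ^ p) x / M x z
      ≤ (Cstar/cM1) * dist x z ^ ε := by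
    intro x hx
    have hdx := hdBpos x hx
    have hD := hdistz x hx
    have hMx := hMpos x hx
    rw [div_le_iff₀ hMx]
    have h2 : Cstar * (dB Ω x ^ γ * dist x z ^ (ε - ((N:ℝ)-2*s+2*γ)))
        = ((Cstar/cM1) * dist x z ^ ε) *
          (cM1 * (dB Ω x ^ γ / dist x z ^ ((N:ℝ)-2*s+2*γ))) := by
      rw [Real.rpow_sub hD]
      field_simp
    calc greenFun Ω G (fun y => M y z ^ p) x
        ≤ Cstar * (dB Ω x ^ γ * dist x z ^ (ε - ((N:ℝ)-2*s+2*γ))) := key x hx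
      _ = ((Cstar/cM1) * dist x z ^ ε) *
          (cM1 * (dB Ω x ^ γ / dist x z ^ ((N:ℝ)-2*s+2*γ))) := h2
      _ ≤ ((Cstar/cM1) * dist x z ^ ε) * M x z := by
          refine mul_le_mul_of_nonneg_left (hMest' x hx z hz).1 ?_
          positivity
  refine squeeze_zero' (g := fun x => (Cstar/cM1) * dist x z ^ ε) ?_ ?_ ?_
  · filter_upwards [self_mem_nhdsWithin] with x hx
    exact hratio_nonneg x hx
  · filter_upwards [self_mem_nhdsWithin] with x hx
    exact hub x hx
  · have h1 : Tendsto (fun x : EuclideanSpace ℝ (Fin N) => dist x z) (𝓝[Ω] z) (𝓝 0) := by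
      have h2 : Tendsto (fun x : EuclideanSpace ℝ (Fin N) => dist x z) (𝓝 z) (𝓝 (dist z z)) :=
        (continuous_id.dist continuous_const).tendsto z
      rw [dist_self] at h2
      exact h2.mono_left nhdsWithin_le_nhds
    have h3 : Tendsto (fun w : ℝ => w ^ ε) (𝓝 0) (𝓝 0) := by
      have h4 := (Real.continuousAt_rpow_const 0 ε (Or.inr hε0.le)).tendsto
      simpa [Real.zero_rpow hε0.ne'] using h4
    have h5 := (h3.comp h1).const_mul (Cstar/cM1)
    simpa using h5
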